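/- Let p_r satisfy p_0 = 0 and p_r = α·p_{r-1} + (k+1)/2^k + γ·(r/2^r) where α = 1 - 1/2^k, γ = (1/2)(1 - 1/2^{k-2}), and k ≥ 2 is an integer. Then p_r = (k+1)·(1-α^r) + δ_r where 0 ≤ δ_r < α^r. -/
import Mathlib


theorem stmt_10 (k : ℕ) (hk : 2 ≤ k)
    (α γ : ℝ) (hα : α = 1 - 1 / 2 ^ k) (hγ : γ = (1/2) * (1 - 1 / 2 ^ (k - 2)))
    (p : ℕ → ℝ) (h0 : p 0 = 0)
    (hrec : ∀ r : ℕ, 1 ≤ r → p r = α * p (r - 1) + ((k : ℝ) + 1) / 2 ^ k + γ * (r / 2 ^ r)) :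
    ∀ r : ℕ, 0 ≤ p r - ((k : ℝ) + 1) * (1 - α ^ r) ∧
      p r - ((k : ℝ) + 1) * (1 - α ^ r) < α ^ r := by
  set ε : ℝ := 1 / 2 ^ k with hεdef
  have h2k : (4:ℝ) ≤ 2 ^ k := by
    calc (4:ℝ) = 2 ^ 2 := by norm_num
    _ ≤ 2 ^ k := by
      apply pow_le_pow_right₀ (by norm_num) hk
  have hε0 : 0 < ε := by positivity
  have hε4 : ε ≤ 1/4 := by
    rw [hεdef, div_le_div_iff₀ (by positivity) (by norm_num)]
    linarith
  have hαe : α = 1 - ε := by rw [hα]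
  have hεα : ε = 1 - α := by rw [hαe]; ring
  have hγe : γ = 1/2 - 2*ε := by
    have h4 : (2:ℝ) ^ (k-2) * 4 = 2 ^ k := by
      rw [show (4:ℝ) = 2 ^ 2 by norm_num, ← pow_add, Nat.sub_add_cancel hk]
    have hpk : (0:ℝ) < 2 ^ (k-2) := by positivity
    rw [hγ, hεdef]
    field_simp
    nlinarith [h4]
  have hα0 : 0 ≤ α := by rw [hαe]; linarith
  have hα1 : α ≤ 1 := by rw [hαe]; linarith
  have hγ0 : 0 ≤ γ := by rw [hγe]; linarith
  have key : ∀ r : ℕ, 0 ≤ p r - ((k : ℝ) + 1) * (1 - α ^ r) ∧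
      p r - ((k : ℝ) + 1) * (1 - α ^ r) ≤ α ^ r - ((r:ℝ) + 2) / 2 ^ (r+1) := by
    intro r
    induction r with
    | zero => simp [h0]
    | succ n ih =>
      have hrec' := hrec (n+1) (by omega)
      simp only [Nat.add_sub_cancel] at hrec'
      have h1 : ((k:ℝ)+1) / 2 ^ k = ((k:ℝ)+1) * ε := by rw [hεdef]; ring
      have hδeq : p (n+1) - ((k:ℝ)+1) * (1 - α ^ (n+1)) =
          α * (p n - ((k:ℝ)+1) * (1 - α ^ n)) + γ * (((n:ℝ)+1) / 2 ^ (n+1)) := by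
        rw [hrec', h1, hεα]
        push_cast
        ring
      have hQ : (0:ℝ) < (2:ℝ) ^ (n+1) := by positivity
      have hn0 : (0:ℝ) ≤ (n:ℝ) := Nat.cast_nonneg n
      constructor
      · rw [hδeq]
        have : 0 ≤ γ * (((n:ℝ)+1) / 2 ^ (n+1)) := by positivity
        nlinarith [mul_nonneg hα0 ih.1]
      · rw [hδeq]
        have step1 : α * (p n - ((k:ℝ)+1) * (1 - α ^ n)) ≤
            α * (α ^ n - ((n:ℝ)+2) / 2 ^ (n+1)) :=
          mul_le_mul_of_nonneg_left ih.2 hα0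
        have step2 : α * (α ^ n - ((n:ℝ)+2) / 2 ^ (n+1)) + γ * (((n:ℝ)+1) / 2 ^ (n+1)) ≤
            α ^ (n+1) - (((n:ℕ):ℝ) + 1 + 2) / 2 ^ (n+1+1) := by
          rw [hαe, hγe, pow_succ (2:ℝ) (n+1), pow_succ (1 - ε) n]
          have hεn : (0:ℝ) ≤ ε * n := by positivity
          rw [← sub_nonneg]
          have heq : ((1-ε)^n*(1-ε) - (((n:ℕ):ℝ)+1+2)/(2^(n+1)*2)) -
              ((1-ε)*((1-ε)^n - ((n:ℝ)+2)/2^(n+1)) + (1/2-2*ε)*(((n:ℝ)+1)/2^(n+1))) =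
              (2*ε*(n:ℝ))/(2^(n+1)*2) := by
            field_simp
            ring
          rw [heq]
          positivity
        push_cast at step2 ⊢
        linarith
  intro r
  refine ⟨(key r).1, lt_of_le_of_lt (key r).2 ?_⟩
  have : (0:ℝ) < ((r:ℝ) + 2) / 2 ^ (r+1) := by positivity
  linarith
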